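/- In the setting above with g(θ,θ) ≠ 0 and p > 1, the four vectors X = J₊θ + fJ₋θ, Y = θ + Kθ, J₊X, J₊Y are linearly independent, hence form a basis of the 4-dimensional space V. -/

import Mathlib

open Module

set_option maxHeartbeats 1000000 in
theorem stmt16 (V : Type*) [AddCommGroup V] [Module ℝ V] [FiniteDimensional ℝ V]
    (hdim : finrank ℝ V = 4)
    (g : LinearMap.BilinForm ℝ V)
    (hsymm : ∀ x y, g x y = g y x)
    (hnd : ∀ x, (∀ y, g x y = 0) → x = 0)
    (Jp Jm : Module.End ℝ V)
    (hJp : Jp * Jp = -1) (hJm : Jm * Jm = -1)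
    (hgp : ∀ x y, g (Jp x) (Jp y) = g x y) (hgm : ∀ x y, g (Jm x) (Jm y) = g x y)
    (p : ℝ) (hp : 1 < p)
    (hanti : Jp * Jm + Jm * Jp = (2 * p) • (1 : Module.End ℝ V))
    (θ : V) (hθ : g θ θ ≠ 0) :
    let f : ℝ := p - Real.sqrt (p ^ 2 - 1)
    let K : Module.End ℝ V := (1 / (2 * Real.sqrt (p ^ 2 - 1))) • (Jp * Jm - Jm * Jp)
    let X : V := Jp θ + f • Jm θ
    let Y : V := θ + K θ
    LinearIndependent ℝ ![X, Y, Jp X, Jp Y] ∧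
      Submodule.span ℝ {X, Y, Jp X, Jp Y} = ⊤ := by
  intro f K X Y
  set s : ℝ := Real.sqrt (p ^ 2 - 1) with hs_def
  have hp2 : (0:ℝ) < p ^ 2 - 1 := by nlinarith
  have hs0 : 0 < s := Real.sqrt_pos.mpr hp2
  have hss : s * s = p ^ 2 - 1 := Real.mul_self_sqrt hp2.le
  have hsp' : s < p := by nlinarith
  have hf : f = p - s := rfl
  have hf0 : 0 < f := by rw [hf]; linarith
  -- pointwise versions of the operator identities
  have hJp' : ∀ v, Jp (Jp v) = -v := by
    intro v
    have h := congrArg (fun (T : Module.End ℝ V) => T v) hJp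
    simpa using h
  have hJm' : ∀ v, Jm (Jm v) = -v := by
    intro v
    have h := congrArg (fun (T : Module.End ℝ V) => T v) hJm
    simpa using h
  have hanti' : ∀ v, Jm (Jp v) = (2*p) • v - Jp (Jm v) := by
    intro v
    have h := congrArg (fun (T : Module.End ℝ V) => T v) hanti
    simp only [LinearMap.add_apply, Module.End.mul_apply, LinearMap.smul_apply,
      Module.End.one_apply] at h
    rw [← h]; abel
  -- adjoint-type identities
  have gp' : ∀ x y, g (Jp x) y = - g x (Jp y) := by
    intro x y
    have h := hgp x (Jp y)
    rw [hJp' y, map_neg] at h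
    linarith
  have gm' : ∀ x y, g (Jm x) y = - g x (Jm y) := by
    intro x y
    have h := hgm x (Jm y)
    rw [hJm' y, map_neg] at h
    linarith
  have skewp : ∀ x, g x (Jp x) = 0 := by
    intro x
    have h := gp' x x
    have h2 := hsymm (Jp x) x
    linarith
  have skewm : ∀ x, g x (Jm x) = 0 := by
    intro x
    have h := gm' x x
    have h2 := hsymm (Jm x) x
    linarith
  -- Gram values on the word basis θ, Jpθ, Jmθ, Jp (Jm θ)
  have w1 : g θ (Jp θ) = 0 := skewp θ
  have w2 : g θ (Jm θ) = 0 := skewm θ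
  have w4 : g θ (Jp (Jm θ)) = p * g θ θ := by
    have h2 := gm' θ (Jp θ)
    rw [hanti' θ, map_sub, map_smul] at h2
    have h1 := gp' θ (Jm θ)
    have h3 := hsymm (Jp θ) (Jm θ)
    simp only [smul_eq_mul] at h2
    linarith
  have w3 : g (Jp θ) (Jm θ) = -(p * g θ θ) := by
    rw [gp' θ (Jm θ), w4]
  have w5 : g (Jp θ) (Jp θ) = g θ θ := hgp θ θ
  have w6 : g (Jp θ) (Jp (Jm θ)) = 0 := by rw [hgp θ (Jm θ)]; exact w2
  have w7 : g (Jm θ) (Jm θ) = g θ θ := hgm θ θ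
  have w8 : g (Jm θ) (Jp (Jm θ)) = 0 := skewp (Jm θ)
  have w9 : g (Jp (Jm θ)) (Jp (Jm θ)) = g θ θ := by rw [hgp (Jm θ) (Jm θ)]; exact w7
  -- flipped versions
  have w1' : g (Jp θ) θ = 0 := by rw [hsymm]; exact w1
  have w2' : g (Jm θ) θ = 0 := by rw [hsymm]; exact w2
  have w3' : g (Jm θ) (Jp θ) = -(p * g θ θ) := by rw [hsymm]; exact w3
  have w4' : g (Jp (Jm θ)) θ = p * g θ θ := by rw [hsymm]; exact w4
  have w6' : g (Jp (Jm θ)) (Jp θ) = 0 := by rw [hsymm]; exact w6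
  have w8' : g (Jp (Jm θ)) (Jm θ) = 0 := by rw [hsymm]; exact w8
  -- the four vectors in word form
  have hXw : X = Jp θ + f • Jm θ := rfl
  have hYw : Y = (1 - p/s) • θ + (1/s) • Jp (Jm θ) := by
    show θ + (1 / (2 * s)) • ((Jp * Jm - Jm * Jp) θ) = _
    rw [LinearMap.sub_apply, Module.End.mul_apply, Module.End.mul_apply, hanti' θ]
    match_scalars <;> (field_simp; try ring; try norm_num)
  have hPX : Jp X = -θ + f • Jp (Jm θ) := by
    rw [hXw, map_add, map_smul, hJp' θ]
  have hPY : Jp Y = (1 - p/s) • Jp θ - (1/s) • Jm θ := by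
    rw [hYw, map_add, map_smul, map_smul, hJp' (Jm θ)]
    module
  -- Gram matrix of X, Y, Jp X, Jp Y
  have GXX : g X X = 0 := by
    rw [hXw]
    simp only [map_add, map_smul, LinearMap.add_apply, LinearMap.smul_apply, smul_eq_mul,
      w1, w2, w3, w3', w5, w7, hf]
    linear_combination (g θ θ) * hss
  have GXY : g X Y = 0 := by
    rw [hXw, hYw]
    simp only [map_add, map_smul, LinearMap.add_apply, LinearMap.smul_apply, smul_eq_mul,
      w1', w2', w6, w8]
    ring
  have GXPX : g X (Jp X) = 0 := by
    rw [hXw, hPX]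
    simp only [map_add, map_smul, map_neg, LinearMap.add_apply, LinearMap.smul_apply,
      LinearMap.neg_apply, smul_eq_mul, w1', w2', w6, w8]
    ring
  have GXPY : g X (Jp Y) = 2*f*s*(g θ θ) := by
    rw [hXw, hPY]
    simp only [map_add, map_sub, map_smul, LinearMap.add_apply, LinearMap.sub_apply,
      LinearMap.smul_apply, smul_eq_mul, w5, w3, w3', w7, hf]
    field_simp
    linear_combination (2*s - p) * hss
  have GYY : g Y Y = 0 := by
    rw [hYw]
    simp only [map_add, map_smul, LinearMap.add_apply, LinearMap.smul_apply, smul_eq_mul,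
      w4, w4', w9]
    field_simp
    linear_combination (g θ θ) * hss
  have GYPX : g Y (Jp X) = -(2*f*s*(g θ θ)) := by
    rw [hYw, hPX]
    simp only [map_add, map_smul, map_neg, LinearMap.add_apply, LinearMap.smul_apply,
      LinearMap.neg_apply, smul_eq_mul, w4, w4', w9, hf]
    field_simp
    linear_combination (p - 2*s) * hss
  have GYPY : g Y (Jp Y) = 0 := by
    rw [hPY, hYw]
    simp only [map_add, map_sub, map_smul, LinearMap.add_apply, LinearMap.sub_apply,
      LinearMap.smul_apply, smul_eq_mul, w1, w2, w6', w8']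
    ring
  have GPXPX : g (Jp X) (Jp X) = 0 := by rw [hgp X X]; exact GXX
  have GPXPY : g (Jp X) (Jp Y) = 0 := by rw [hgp X Y]; exact GXY
  have GPYPY : g (Jp Y) (Jp Y) = 0 := by rw [hgp Y Y]; exact GYY
  -- flipped Gram values
  have GYX : g Y X = 0 := by rw [hsymm]; exact GXY
  have GPXX : g (Jp X) X = 0 := by rw [hsymm]; exact GXPX
  have GPXY : g (Jp X) Y = -(2*f*s*(g θ θ)) := by rw [hsymm]; exact GYPX
  have GPYX : g (Jp Y) X = 2*f*s*(g θ θ) := by rw [hsymm]; exact GXPY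
  have GPYY : g (Jp Y) Y = 0 := by rw [hsymm]; exact GYPY
  have GPYPX : g (Jp Y) (Jp X) = 0 := by rw [hsymm]; exact GPXPY
  have hC : 2*f*s*(g θ θ) ≠ 0 := by
    apply mul_ne_zero (mul_ne_zero (by positivity) (by positivity)) hθ
  have hli : LinearIndependent ℝ ![X, Y, Jp X, Jp Y] := by
    rw [Fintype.linearIndependent_iff]
    intro co hco
    rw [Fin.sum_univ_four] at hco
    simp only [Matrix.cons_val_zero, Matrix.cons_val_one, Matrix.head_cons,
      Matrix.cons_val_two, Matrix.tail_cons, Matrix.cons_val_three] at hco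
    have e1 : co 2 * -(2*f*s*(g θ θ)) = 0 := by
      have h := congrArg (fun w => g w Y) hco
      simpa [map_add, map_smul, LinearMap.add_apply, LinearMap.smul_apply, smul_eq_mul,
        GXY, GYY, GPXY, GPYY] using h
    have e2 : co 3 * (2*f*s*(g θ θ)) = 0 := by
      have h := congrArg (fun w => g w X) hco
      simpa [map_add, map_smul, LinearMap.add_apply, LinearMap.smul_apply, smul_eq_mul,
        GXX, GYX, GPXX, GPYX] using h
    have e3 : co 0 * (2*f*s*(g θ θ)) = 0 := by
      have h := congrArg (fun w => g w (Jp Y)) hco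
      simpa [map_add, map_smul, LinearMap.add_apply, LinearMap.smul_apply, smul_eq_mul,
        GXPY, GYPY, GPXPY, GPYPY] using h
    have e4 : co 1 * -(2*f*s*(g θ θ)) = 0 := by
      have h := congrArg (fun w => g w (Jp X)) hco
      simpa [map_add, map_smul, LinearMap.add_apply, LinearMap.smul_apply, smul_eq_mul,
        GXPX, GYPX, GPXPX, GPYPX] using h
    have h0 : co 0 = 0 := by
      rcases mul_eq_zero.mp e3 with h | h
      · exact h
      · exact absurd h hC
    have h1 : co 1 = 0 := by
      rcases mul_eq_zero.mp e4 with h | h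
      · exact h
      · exact absurd (neg_eq_zero.mp h) hC
    have h2 : co 2 = 0 := by
      rcases mul_eq_zero.mp e1 with h | h
      · exact h
      · exact absurd (neg_eq_zero.mp h) hC
    have h3 : co 3 = 0 := by
      rcases mul_eq_zero.mp e2 with h | h
      · exact h
      · exact absurd h hC
    intro i
    fin_cases i <;> assumption
  refine ⟨hli, ?_⟩
  have hsp2 := LinearIndependent.span_eq_top_of_card_eq_finrank hli
    (by simp [hdim])
  have hrange : Set.range ![X, Y, Jp X, Jp Y] = {X, Y, Jp X, Jp Y} := by
    ext v
    simp [Fin.exists_fin_succ, or_assoc]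
    tauto
  rwa [hrange] at hsp2
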